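/- Let (F_s)_{s≥0} be a filtration, θ* ∈ ℝ with |θ*| ≠ 1, σ > 0, and let (X_s) satisfy X_{s+1} = θ* X_s + ε_{s+1}, where X_s is F_s-measurable and square-integrable and the noise (ε_s) is adapted with E[ε_{s+i} | F_s] = 0, E[ε_{s+i}² | F_s] = σ², and E[ε_{s+i} ε_{s+j} | F_s] = 0 for all i ≠ j ≥ 1. Fix n ≥ 1, θ ∈ ℝ, and define the mini-batch squared-loss gradient g(θ) = −(2/n) Σ_{i=1}^{n} X_{s+i-1} (X_{s+i} − θ X_{s+i-1}). Then, almost surely, E[g(θ) | F_s] − 2σ²(θ − θ*)/(1 − (θ*)²) = ( 2(θ − θ*)(1 − (θ*)^{2n}) / ( n (1 − (θ*)²) ) ) · ( X_s² − σ²/(1 − (θ*)²) ). -/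

import Mathlib

open MeasureTheory Finset

lemma integrable_mul_of_L2 {Ω : Type*} {m0 : MeasurableSpace Ω} {P : Measure Ω}
    {f g : Ω → ℝ} (hf : MemLp f 2 P) (hg : MemLp g 2 P) :
    Integrable (fun ω => f ω * g ω) P := by
  have h : MemLp (f • g) 1 P := hg.smul (p := 2) (q := 2) hf
  rw [memLp_one_iff_integrable] at h
  exact h

lemma key_alg (n : ℕ) (hn : 1 ≤ n) (θst θv σ x : ℝ) (ha : θst ^ 2 ≠ 1) :
    -(2 / (n : ℝ)) * ∑ i ∈ Icc 1 n,
        (θst - θv) * (θst ^ (2 * (i - 1)) * x + σ ^ 2 * ∑ k ∈ range (i - 1), θst ^ (2 * k))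
      - 2 * σ ^ 2 * (θv - θst) / (1 - θst ^ 2)
    = 2 * (θv - θst) * (1 - θst ^ (2 * n)) / ((n : ℝ) * (1 - θst ^ 2))
      * (x - σ ^ 2 / (1 - θst ^ 2)) := by
  have hn0 : (n : ℝ) ≠ 0 := Nat.cast_ne_zero.2 (by omega)
  have h1a : (θst ^ 2 : ℝ) - 1 ≠ 0 := sub_ne_zero.2 ha
  have h1a' : (1 : ℝ) - θst ^ 2 ≠ 0 := fun h => h1a (by linarith)
  rw [← Finset.Ico_add_one_right_eq_Icc, Finset.sum_Ico_eq_sum_range]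
  have hrn : n.succ - 1 = n := rfl
  simp only [hrn, Nat.add_sub_cancel, Nat.add_sub_cancel_left, pow_mul]
  have hgeom : ∀ m : ℕ, ∑ k ∈ range m, (θst ^ 2) ^ k = ((θst ^ 2) ^ m - 1) / (θst ^ 2 - 1) :=
    fun m => geom_sum_eq ha m
  have hstep : ∀ i ∈ range n,
      (θst - θv) * ((θst ^ 2) ^ i * x + σ ^ 2 * ∑ k ∈ range i, (θst ^ 2) ^ k)
      = ((θst - θv) * x + (θst - θv) * σ ^ 2 / (θst ^ 2 - 1)) * (θst ^ 2) ^ i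
        - (θst - θv) * σ ^ 2 / (θst ^ 2 - 1) := by
    intro i _
    rw [hgeom i]
    field_simp
    ring
  rw [Finset.sum_congr rfl hstep, Finset.sum_sub_distrib, ← Finset.mul_sum, hgeom n,
    Finset.sum_const, Finset.card_range, nsmul_eq_mul]
  field_simp
  ring

lemma ar1_cross_zero {Ω : Type*} {m0 : MeasurableSpace Ω} (P : Measure Ω) [IsProbabilityMeasure P]
    (ℱ : MeasureTheory.Filtration ℕ m0) (θst : ℝ)
    (X ε : ℕ → Ω → ℝ)
    (hXmeas : ∀ s, Measurable[ℱ s] (X s))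
    (hXL2 : ∀ s, MemLp (X s) 2 P)
    (hεL2 : ∀ s, MemLp (ε s) 2 P)
    (hAR : ∀ s ω, X (s + 1) ω = θst * X s ω + ε (s + 1) ω)
    (hεmean : ∀ s i : ℕ, 1 ≤ i → P[ε (s + i) | ℱ s] =ᵐ[P] 0)
    (hεuncorr : ∀ s i j : ℕ, 1 ≤ i → 1 ≤ j → i ≠ j →
      P[(fun ω => ε (s + i) ω * ε (s + j) ω) | ℱ s] =ᵐ[P] 0)
    (s : ℕ) :
    ∀ i j, i < j → P[(fun ω => X (s + i) ω * ε (s + j) ω) | ℱ s] =ᵐ[P] 0 := by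
  intro i
  induction i with
  | zero =>
    intro j hj
    simp only [Nat.add_zero]
    have h0 : P[(fun ω => X s ω * ε (s + j) ω) | ℱ s]
        =ᵐ[P] fun ω => X s ω * (P[ε (s + j) | ℱ s]) ω :=
      condExp_mul_of_stronglyMeasurable_left ((hXmeas s).stronglyMeasurable)
        (integrable_mul_of_L2 (hXL2 s) (hεL2 (s + j)))
        ((hεL2 (s + j)).integrable one_le_two)
    filter_upwards [h0, hεmean s j hj] with ω h1 h2
    simp only [h1, h2, Pi.zero_apply, mul_zero]
  | succ i ih =>
    intro j hj
    have heq : (fun ω => X (s + (i + 1)) ω * ε (s + j) ω)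
        = (θst • fun ω => X (s + i) ω * ε (s + j) ω)
          + fun ω => ε (s + (i + 1)) ω * ε (s + j) ω := by
      funext ω
      have h := hAR (s + i) ω
      simp only [Pi.add_apply, Pi.smul_apply, smul_eq_mul]
      rw [show s + (i + 1) = s + i + 1 from rfl, h]
      ring
    rw [heq]
    have hint1 : Integrable (θst • fun ω => X (s + i) ω * ε (s + j) ω) P :=
      (integrable_mul_of_L2 (hXL2 (s + i)) (hεL2 (s + j))).smul θst
    have hint2 : Integrable (fun ω => ε (s + (i + 1)) ω * ε (s + j) ω) P :=
      integrable_mul_of_L2 (hεL2 (s + (i + 1))) (hεL2 (s + j))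
    have hadd := condExp_add (m := ℱ s) hint1 hint2
    have hsmul := condExp_smul (m := ℱ s) (μ := P) θst (fun ω => X (s + i) ω * ε (s + j) ω)
    have hIH := ih j (Nat.lt_of_succ_lt hj)
    have hunc := hεuncorr s (i + 1) j (Nat.le_add_left 1 i) (by omega) (by omega)
    filter_upwards [hadd, hsmul, hIH, hunc] with ω h1 h2 h3 h4
    simp only [Pi.add_apply, h1, h2, Pi.smul_apply, smul_eq_mul, h3, h4,
      Pi.zero_apply, mul_zero, add_zero]

lemma ar1_sq_condexp {Ω : Type*} {m0 : MeasurableSpace Ω} (P : Measure Ω) [IsProbabilityMeasure P]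
    (ℱ : MeasureTheory.Filtration ℕ m0) (θst σ : ℝ)
    (X ε : ℕ → Ω → ℝ)
    (hXmeas : ∀ s, Measurable[ℱ s] (X s))
    (hXL2 : ∀ s, MemLp (X s) 2 P)
    (hεL2 : ∀ s, MemLp (ε s) 2 P)
    (hAR : ∀ s ω, X (s + 1) ω = θst * X s ω + ε (s + 1) ω)
    (hεmean : ∀ s i : ℕ, 1 ≤ i → P[ε (s + i) | ℱ s] =ᵐ[P] 0)
    (hεvar : ∀ s i : ℕ, 1 ≤ i →
      P[(fun ω => ε (s + i) ω ^ 2) | ℱ s] =ᵐ[P] fun _ => σ ^ 2)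
    (hεuncorr : ∀ s i j : ℕ, 1 ≤ i → 1 ≤ j → i ≠ j →
      P[(fun ω => ε (s + i) ω * ε (s + j) ω) | ℱ s] =ᵐ[P] 0)
    (s : ℕ) :
    ∀ i, P[(fun ω => X (s + i) ω ^ 2) | ℱ s]
      =ᵐ[P] fun ω => θst ^ (2 * i) * X s ω ^ 2 + σ ^ 2 * ∑ k ∈ range i, θst ^ (2 * k) := by
  intro i
  induction i with
  | zero =>
    simp only [Nat.add_zero, Nat.mul_zero, pow_zero, range_zero, sum_empty, mul_zero,
      add_zero, one_mul]
    rw [condExp_of_stronglyMeasurable (ℱ.le s)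
      (((hXmeas s).pow_const 2).stronglyMeasurable) (hXL2 s).integrable_sq]
  | succ i ih =>
    have heq : (fun ω => X (s + (i + 1)) ω ^ 2)
        = ((θst ^ 2) • fun ω => X (s + i) ω ^ 2)
          + (((2 * θst) • fun ω => X (s + i) ω * ε (s + (i + 1)) ω)
            + fun ω => ε (s + (i + 1)) ω ^ 2) := by
      funext ω
      have h := hAR (s + i) ω
      simp only [Pi.add_apply, Pi.smul_apply, smul_eq_mul]
      rw [show s + (i + 1) = s + i + 1 from rfl, h]
      ring
    rw [heq]
    have hi1 : Integrable ((θst ^ 2) • fun ω => X (s + i) ω ^ 2) P :=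
      ((hXL2 (s + i)).integrable_sq).smul (θst ^ 2)
    have hi2 : Integrable ((2 * θst) • fun ω => X (s + i) ω * ε (s + (i + 1)) ω) P :=
      (integrable_mul_of_L2 (hXL2 (s + i)) (hεL2 (s + (i + 1)))).smul (2 * θst)
    have hi3 : Integrable (fun ω => ε (s + (i + 1)) ω ^ 2) P :=
      (hεL2 (s + (i + 1))).integrable_sq
    have hadd1 := condExp_add (m := ℱ s) hi1 (hi2.add hi3)
    have hadd2 := condExp_add (m := ℱ s) hi2 hi3
    have hs1 := condExp_smul (m := ℱ s) (μ := P) (θst ^ 2) (fun ω => X (s + i) ω ^ 2)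
    have hs2 := condExp_smul (m := ℱ s) (μ := P) (2 * θst)
      (fun ω => X (s + i) ω * ε (s + (i + 1)) ω)
    have hcross := ar1_cross_zero P ℱ θst X ε hXmeas hXL2 hεL2 hAR hεmean hεuncorr s
      i (i + 1) (Nat.lt_succ_self i)
    have hvar := hεvar s (i + 1) (Nat.le_add_left 1 i)
    filter_upwards [hadd1, hadd2, hs1, hs2, ih, hcross, hvar] with ω h1 h2 h3 h4 h5 h6 h7
    simp only [Pi.add_apply, h1, h2, h3, h4, Pi.smul_apply, smul_eq_mul, h5, h6, h7,
      Pi.zero_apply, mul_zero, add_zero]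
    simp only [pow_mul]
    rw [geom_sum_succ]
    ring

/-- Conditional bias of the streaming mini-batch least-squares gradient for a
well-specified AR(1) model. -/
theorem ar1_minibatch_gradient_conditional_bias
    {Ω : Type*} {m0 : MeasurableSpace Ω} (P : Measure Ω) [IsProbabilityMeasure P]
    (ℱ : MeasureTheory.Filtration ℕ m0)
    (θst : ℝ) (hθst : |θst| ≠ 1) (σ : ℝ) (hσ : 0 < σ)
    (X ε : ℕ → Ω → ℝ)
    (hXmeas : ∀ s, Measurable[ℱ s] (X s))
    (hXL2 : ∀ s, MemLp (X s) 2 P)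
    (hεmeas : ∀ s, Measurable[ℱ s] (ε s))
    (hεL2 : ∀ s, MemLp (ε s) 2 P)
    (hAR : ∀ s ω, X (s + 1) ω = θst * X s ω + ε (s + 1) ω)
    (hεmean : ∀ s i : ℕ, 1 ≤ i → P[ε (s + i) | ℱ s] =ᵐ[P] 0)
    (hεvar : ∀ s i : ℕ, 1 ≤ i →
      P[(fun ω => ε (s + i) ω ^ 2) | ℱ s] =ᵐ[P] fun _ => σ ^ 2)
    (hεuncorr : ∀ s i j : ℕ, 1 ≤ i → 1 ≤ j → i ≠ j →
      P[(fun ω => ε (s + i) ω * ε (s + j) ω) | ℱ s] =ᵐ[P] 0)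
    (s n : ℕ) (hn : 1 ≤ n) (θv : ℝ) :
    (fun ω =>
        (P[(fun ω' => -(2 / (n : ℝ)) * ∑ i ∈ Icc 1 n,
            X (s + i - 1) ω' * (X (s + i) ω' - θv * X (s + i - 1) ω')) | ℱ s]) ω
          - 2 * σ ^ 2 * (θv - θst) / (1 - θst ^ 2)) =ᵐ[P]
      fun ω => (2 * (θv - θst) * (1 - θst ^ (2 * n)) / ((n : ℝ) * (1 - θst ^ 2)))
        * (X s ω ^ 2 - σ ^ 2 / (1 - θst ^ 2)) := by
  have ha : (θst ^ 2 : ℝ) ≠ 1 := by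
    intro h
    apply hθst
    have h2 : (θst - 1) * (θst + 1) = 0 := by ring_nf; linarith
    rcases mul_eq_zero.mp h2 with h3 | h3
    · rw [show θst = 1 by linarith]; simp
    · rw [show θst = -1 by linarith]; simp
  -- the summand functions
  set h : ℕ → Ω → ℝ := fun i ω => X (s + i - 1) ω * (X (s + i) ω - θv * X (s + i - 1) ω) with hh
  have hhInt : ∀ i : ℕ, Integrable (h i) P := by
    intro i
    exact integrable_mul_of_L2 (hXL2 (s + i - 1))
      ((hXL2 (s + i)).sub ((hXL2 (s + i - 1)).const_mul θv))
  -- rewrite the integrand as a scalar multiple of a finset sum of functions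
  have hfun : (fun ω' => -(2 / (n : ℝ)) * ∑ i ∈ Icc 1 n,
      X (s + i - 1) ω' * (X (s + i) ω' - θv * X (s + i - 1) ω'))
      = (-(2 / (n : ℝ))) • ∑ i ∈ Icc 1 n, h i := by
    funext ω
    simp [hh, Finset.sum_apply, smul_eq_mul]
  -- conditional expectation of each summand
  have hXε := ar1_cross_zero P ℱ θst X ε hXmeas hXL2 hεL2 hAR hεmean hεuncorr s
  have hX2 := ar1_sq_condexp P ℱ θst σ X ε hXmeas hXL2 hεL2 hAR hεmean hεvar hεuncorr s
  have hcond : ∀ i ∈ Icc 1 n, P[h i | ℱ s] =ᵐ[P]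
      fun ω => (θst - θv) * (θst ^ (2 * (i - 1)) * X s ω ^ 2
        + σ ^ 2 * ∑ k ∈ range (i - 1), θst ^ (2 * k)) := by
    intro i hi
    have hi1 : 1 ≤ i := (Finset.mem_Icc.mp hi).1
    obtain ⟨j, rfl⟩ : ∃ j, i = j + 1 := ⟨i - 1, by omega⟩
    have hidx : s + (j + 1) - 1 = s + j := by omega
    have hsplit : h (j + 1) = ((θst - θv) • fun ω => X (s + j) ω ^ 2)
        + fun ω => X (s + j) ω * ε (s + (j + 1)) ω := by
      funext ω
      simp only [hh, Pi.add_apply, Pi.smul_apply, smul_eq_mul, hidx]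
      rw [show s + (j + 1) = s + j + 1 from rfl, hAR (s + j) ω]
      ring
    rw [hsplit]
    have hint1 : Integrable ((θst - θv) • fun ω => X (s + j) ω ^ 2) P :=
      ((hXL2 (s + j)).integrable_sq).smul (θst - θv)
    have hint2 : Integrable (fun ω => X (s + j) ω * ε (s + (j + 1)) ω) P :=
      integrable_mul_of_L2 (hXL2 (s + j)) (hεL2 (s + (j + 1)))
    have hadd := condExp_add (m := ℱ s) hint1 hint2
    have hsmul := condExp_smul (m := ℱ s) (μ := P) (θst - θv)
      (fun ω => X (s + j) ω ^ 2)
    have hc : P[(fun ω => X (s + j) ω * ε (s + (j + 1)) ω) | ℱ s] =ᵐ[P] 0 :=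
      hXε j (j + 1) (Nat.lt_succ_self _)
    have hsq := hX2 j
    filter_upwards [hadd, hsmul, hc, hsq] with ω h1 h2 h3 h4
    simp only [Nat.add_sub_cancel, Pi.add_apply, h1, h2, Pi.smul_apply, smul_eq_mul,
      h3, h4, Pi.zero_apply, add_zero]
  -- combine
  have hsum : P[∑ i ∈ Icc 1 n, h i | ℱ s] =ᵐ[P] ∑ i ∈ Icc 1 n, P[h i | ℱ s] :=
    condExp_finset_sum (fun i _ => hhInt i) _
  have hsum2 : (∑ i ∈ Icc 1 n, P[h i | ℱ s]) =ᵐ[P]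
      ∑ i ∈ Icc 1 n, fun ω => (θst - θv) * (θst ^ (2 * (i - 1)) * X s ω ^ 2
        + σ ^ 2 * ∑ k ∈ range (i - 1), θst ^ (2 * k)) :=
    eventuallyEq_sum hcond
  have hsmul0 := condExp_smul (m := ℱ s) (μ := P) (-(2 / (n : ℝ))) (∑ i ∈ Icc 1 n, h i)
  simp only [hfun]
  filter_upwards [hsmul0, hsum, hsum2] with ω h1 h2 h3
  rw [h1]
  simp only [Pi.smul_apply, smul_eq_mul]
  rw [h2, h3]
  simp only [Finset.sum_apply]
  exact key_alg n hn θst θv σ (X s ω ^ 2) ha
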